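/- Let (x_k), (y_k), (t_k) be generated by Algorithm 1 started at x_0. Suppose r is the first iteration at which the restart condition f'(y_r)·(x_{r+1} − x_r) > 0 is satisfied, and r̄ > r is the second such iteration. Then for every k with r + 3 ≤ k ≤ r̄ + 1 one has f(x_k) − f* ≤ (4 / ((k − r)(r + 2)))² · (L/2)·(x_0 − x*)² ≤ 2L(x_0 − x*)² / (k+1)². -/

import Mathlib

open Filter Finset

/-- The gradient step operator `T(y) = y - (1/L) f'(y)`. -/
noncomputable def gradStep (L : ℝ) (f : ℝ → ℝ) (y : ℝ) : ℝ := y - (1 / L) * deriv f y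

/-- A parameter sequence for accelerated gradient descent:
`t 0 = 1`, `t k ≥ (k+2)/2` and `t k ^ 2 ≥ t (k+1) ^ 2 - t (k+1)`. -/
def ParamSeq (t : ℕ → ℝ) : Prop :=
  t 0 = 1 ∧ ∀ k : ℕ, ((k : ℝ) + 2) / 2 ≤ t k ∧ (t (k + 1)) ^ 2 - t (k + 1) ≤ (t k) ^ 2

/-- The gradient restart condition `f'(y_k) (x_{k+1} - x_k) > 0` at iteration `k`. -/
def RestartAt (f : ℝ → ℝ) (x y : ℕ → ℝ) (k : ℕ) : Prop :=
  0 < deriv f (y k) * (x (k + 1) - x k)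

/-- `IsAlgo1 L f tt x0 x y t` : the sequences `x`, `y`, `t` are generated by Algorithm 1
(AGD with gradient restarts) with parameter sequence `tt`, started at `x0`.
The counter `c` keeps track of the position in the parameter sequence; it is reset to `0`
whenever the gradient restart condition is triggered, which realizes the reset
`t_{k+1+m} := tt_m` of the parameters. -/
def IsAlgo1 (L : ℝ) (f : ℝ → ℝ) (tt : ℕ → ℝ) (x0 : ℝ) (x y t : ℕ → ℝ) : Prop :=
  x 0 = x0 ∧ y 0 = x0 ∧
  (∀ k, x (k + 1) = gradStep L f (y k)) ∧
  ∃ c : ℕ → ℕ, c 0 = 0 ∧ (∀ k, t k = tt (c k)) ∧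
    ∀ k,
      (deriv f (y k) * (x (k + 1) - x k) ≤ 0 →
        y (k + 1) = x (k + 1) + ((t k - 1) / t (k + 1)) * (x (k + 1) - x k) ∧
          c (k + 1) = c k + 1) ∧
      (0 < deriv f (y k) * (x (k + 1) - x k) →
        y (k + 1) = x (k + 1) ∧ c (k + 1) = 0)

/-- Convex subgradient inequality. -/
lemma my_subgrad {f : ℝ → ℝ} (hconv : ConvexOn ℝ Set.univ f) (hdiff : Differentiable ℝ f)
    (y w : ℝ) : f y + deriv f y * (w - y) ≤ f w := by
  rcases lt_trichotomy y w with h | h | h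
  · have h1 := hconv.deriv_le_slope (Set.mem_univ y) (Set.mem_univ w) h (hdiff y)
    rw [slope_def_field] at h1
    have h2 : deriv f y * (w - y) ≤ f w - f y := by
      have := (le_div_iff₀ (by linarith)).mp h1
      linarith
    linarith
  · subst h; simp
  · have h1 := hconv.slope_le_deriv (Set.mem_univ w) (Set.mem_univ y) h (hdiff y)
    rw [slope_def_field] at h1
    have h2 : f y - f w ≤ deriv f y * (y - w) := by
      have := (div_le_iff₀ (by linarith)).mp h1
      linarith
    linarith

/-- Descent lemma for L-Lipschitz derivative. -/
lemma my_descent {L : ℝ} (hL : 0 < L) {f : ℝ → ℝ} (hdiff : Differentiable ℝ f)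
    (hlip : ∀ a b : ℝ, |deriv f a - deriv f b| ≤ L * |a - b|) (a b : ℝ) :
    f b ≤ f a + deriv f a * (b - a) + L / 2 * (b - a) ^ 2 := by
  set g : ℝ → ℝ := fun u => f a + deriv f a * (u - a) + L / 2 * (u - a) ^ 2 - f u with hg
  have hg' : ∀ u : ℝ, HasDerivAt g (deriv f a + L * (u - a) - deriv f u) u := by
    intro u
    have h1 : HasDerivAt (fun u : ℝ => u - a) 1 u := (hasDerivAt_id u).sub_const a
    have h2 : HasDerivAt (fun u : ℝ => deriv f a * (u - a)) (deriv f a * 1) u := h1.const_mul _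
    have h3 : HasDerivAt (fun u : ℝ => (u - a) ^ 2) (2 * (u - a) ^ 1 * 1) u := h1.pow 2
    have h4 := h3.const_mul (L / 2)
    have h5 := ((hasDerivAt_const u (f a)).add h2).add h4
    have h6 := h5.sub (hdiff u).hasDerivAt
    refine h6.congr_deriv ?_
    ring
  have hgd : Differentiable ℝ g := fun u => (hg' u).differentiableAt
  have hga : g a = 0 := by simp [hg]
  have key : 0 ≤ g b := by
    rcases lt_trichotomy a b with h | h | h
    · obtain ⟨c, hc, hceq⟩ := exists_deriv_eq_slope g h hgd.continuous.continuousOn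
        (hgd.differentiableOn)
      have hdc : deriv g c = deriv f a + L * (c - a) - deriv f c := (hg' c).deriv
      have hl := hlip c a
      rw [abs_of_pos (by linarith [hc.1] : (0:ℝ) < c - a)] at hl
      have h7 : deriv f c - deriv f a ≤ L * (c - a) := (abs_le.mp hl).2
      have h8 : 0 ≤ deriv g c := by rw [hdc]; linarith
      rw [hceq, hga] at h8
      have hd : (0:ℝ) < b - a := by linarith
      have h9 := (le_div_iff₀ hd).mp (by simpa using h8 : (0:ℝ) ≤ (g b - 0) / (b - a))
      linarith
    · subst h; simp [hga]
    · obtain ⟨c, hc, hceq⟩ := exists_deriv_eq_slope g h hgd.continuous.continuousOn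
        (hgd.differentiableOn)
      have hdc : deriv g c = deriv f a + L * (c - a) - deriv f c := (hg' c).deriv
      have hl := hlip c a
      rw [abs_of_neg (by linarith [hc.2] : c - a < 0)] at hl
      have h7 : -(L * -(c - a)) ≤ deriv f c - deriv f a := (abs_le.mp hl).1
      have h8 : deriv g c ≤ 0 := by rw [hdc]; linarith
      rw [hceq, hga] at h8
      -- h8 : (g a' - g b)/(a - b) ≤ 0  with slope (g a - g b)/(a - b), g a = 0
      have hd : (0:ℝ) < a - b := by linarith
      have h9 := (div_le_iff₀ hd).mp h8
      linarith
  have key' : 0 ≤ f a + deriv f a * (b - a) + L / 2 * (b - a) ^ 2 - f b := key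
  linarith

/-- Key one-step inequality. -/
lemma my_key {L : ℝ} (hL : 0 < L) {f : ℝ → ℝ} (hconv : ConvexOn ℝ Set.univ f)
    (hdiff : Differentiable ℝ f)
    (hlip : ∀ a b : ℝ, |deriv f a - deriv f b| ≤ L * |a - b|) (y u : ℝ) :
    f (y - (1 / L) * deriv f y) - f u ≤
      L / 2 * ((y - u) ^ 2 - (y - (1 / L) * deriv f y - u) ^ 2) := by
  have hLne : L ≠ 0 := ne_of_gt hL
  set X := y - (1 / L) * deriv f y with hXdef
  have hX : L * (X - y) + deriv f y = 0 := by
    rw [hXdef]; field_simp; ring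
  have h1 : f X ≤ f y + deriv f y * (X - y) + L / 2 * (X - y) ^ 2 :=
    my_descent hL hdiff hlip y X
  have h2 : f y + deriv f y * (u - y) ≤ f u := my_subgrad hconv hdiff y u
  have E : deriv f y * (X - y) + L / 2 * (X - y) ^ 2 - deriv f y * (u - y)
      - L / 2 * (y - u) ^ 2 + L / 2 * (X - u) ^ 2 = 0 := by
    linear_combination (X - u) / 2 * hX + (X - u) / 2 * hX
  linarith [h1, h2, E]

lemma twoL {L : ℝ} (hL : L ≠ 0) (X : ℝ) : 2 / L * (L / 2 * X) = X := by
  field_simp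

/-- ParamSeq-style facts. -/
lemma tt_ge {tt : ℕ → ℝ} (htt : ∀ k : ℕ, ((k : ℝ) + 2) / 2 ≤ tt k) (k : ℕ) : 1 ≤ tt k := by
  have := htt k
  have hk : (0:ℝ) ≤ (k:ℝ) := Nat.cast_nonneg k
  linarith

/-- FISTA Lyapunov bound for a restart-free run. -/
lemma my_agd {L : ℝ} (hL : 0 < L) {f : ℝ → ℝ} (hconv : ConvexOn ℝ Set.univ f)
    (hdiff : Differentiable ℝ f)
    (hlip : ∀ a b : ℝ, |deriv f a - deriv f b| ≤ L * |a - b|)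
    {tt : ℕ → ℝ} (htt0 : tt 0 = 1) (httge : ∀ k : ℕ, ((k : ℝ) + 2) / 2 ≤ tt k)
    (httsq : ∀ k : ℕ, (tt (k + 1)) ^ 2 - tt (k + 1) ≤ (tt k) ^ 2)
    (u v : ℕ → ℝ) (hv0 : v 0 = u 0)
    (hstep : ∀ j : ℕ, u (j + 1) = v j - (1 / L) * deriv f (v j))
    (n : ℕ)
    (hy : ∀ j : ℕ, j + 2 ≤ n →
      v (j + 1) = u (j + 1) + ((tt j - 1) / tt (j + 1)) * (u (j + 1) - u j))
    (z : ℝ) (hz : IsMinOn f Set.univ z) :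
    ∀ j : ℕ, j + 1 ≤ n →
      2 / L * (tt j) ^ 2 * (f (u (j + 1)) - f z) +
        (tt j * u (j + 1) - (tt j - 1) * u j - z) ^ 2 ≤ (u 0 - z) ^ 2 := by
  intro j
  induction j with
  | zero =>
    intro _
    have hk := my_key hL hconv hdiff hlip (v 0) z
    rw [← hstep 0, hv0] at hk
    have hLL := twoL (ne_of_gt hL) ((u 0 - z) ^ 2 - (u 1 - z) ^ 2)
    have h2 := mul_le_mul_of_nonneg_left hk (by positivity : (0:ℝ) ≤ 2 / L)
    rw [hLL] at h2
    rw [htt0]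
    ring_nf
    ring_nf at h2
    linarith
  | succ j ih =>
    intro hjn
    have ihh := ih (by omega)
    show 2 / L * tt (j+1) ^ 2 * (f (u (j+2)) - f z) +
      (tt (j+1) * u (j+2) - (tt (j+1) - 1) * u (j+1) - z) ^ 2 ≤ (u 0 - z) ^ 2
    set t := tt (j + 1) with htdef
    set tp := tt j with htpdef
    set a := u j
    set b := u (j + 1)
    set p := u (j + 2)
    set Y := v (j + 1) with hYdef
    have ht1 : 1 ≤ t := tt_ge httge (j + 1)
    have htp1 : 1 ≤ tp := tt_ge httge j
    have ht0 : (0:ℝ) < t := by linarith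
    have hYeq : Y = b + ((tp - 1) / t) * (b - a) := hy j hjn
    have hYmul : t * Y = t * b + (tp - 1) * (b - a) := by
      rw [hYeq]; field_simp
    have hpstep : p = Y - (1 / L) * deriv f Y := hstep (j + 1)
    have key1 : f p - f b ≤ L / 2 * ((Y - b) ^ 2 - (p - b) ^ 2) := by
      have := my_key hL hconv hdiff hlip Y b; rw [← hpstep] at this; exact this
    have key2 : f p - f z ≤ L / 2 * ((Y - z) ^ 2 - (p - z) ^ 2) := by
      have := my_key hL hconv hdiff hlip Y z; rw [← hpstep] at this; exact this
    have hv : 0 ≤ f b - f z := by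
      have h := hz (Set.mem_univ b)
      simp only [Set.mem_setOf_eq] at h
      linarith
    have hcond : t ^ 2 - t ≤ tp ^ 2 := httsq j
    have A1 : t * (t - 1) * (f p - f b) ≤ t * (t - 1) * (L / 2 * ((Y - b) ^ 2 - (p - b) ^ 2)) :=
      mul_le_mul_of_nonneg_left key1 (by nlinarith)
    have A2 : t * (f p - f z) ≤ t * (L / 2 * ((Y - z) ^ 2 - (p - z) ^ 2)) :=
      mul_le_mul_of_nonneg_left key2 (by linarith)
    have A3 : (t ^ 2 - t) * (f b - f z) ≤ tp ^ 2 * (f b - f z) :=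
      mul_le_mul_of_nonneg_right hcond hv
    have A4 : t * (t - 1) * (L / 2 * ((Y - b) ^ 2 - (p - b) ^ 2))
        + t * (L / 2 * ((Y - z) ^ 2 - (p - z) ^ 2))
        = L / 2 * ((t * Y - (t - 1) * b - z) ^ 2 - (t * p - (t - 1) * b - z) ^ 2) := by
      ring
    have A5 : t * Y - (t - 1) * b = tp * b - (tp - 1) * a := by linarith [hYmul]
    rw [A5] at A4
    have main : t ^ 2 * (f p - f z) ≤ tp ^ 2 * (f b - f z)
        + L / 2 * ((tp * b - (tp - 1) * a - z) ^ 2 - (t * p - (t - 1) * b - z) ^ 2) := by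
      linarith [A1, A2, A3, A4]
    have h2L : (0:ℝ) < 2 / L := by positivity
    have main2 := mul_le_mul_of_nonneg_left main (le_of_lt h2L)
    set S1 := (tp * b - (tp - 1) * a - z) ^ 2 with hS1
    set S2 := (t * p - (t - 1) * b - z) ^ 2 with hS2
    have e3 : 2 / L * (tp ^ 2 * (f b - f z) + L / 2 * (S1 - S2))
        = 2 / L * (tp ^ 2 * (f b - f z)) + (S1 - S2) := by
      rw [mul_add, twoL (ne_of_gt hL)]
    rw [e3] at main2
    have m1 : 2 / L * t ^ 2 * (f p - f z) = 2 / L * (t ^ 2 * (f p - f z)) := by ring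
    have m2 : 2 / L * tp ^ 2 * (f b - f z) = 2 / L * (tp ^ 2 * (f b - f z)) := by ring
    have goal1 : 2 / L * t ^ 2 * (f p - f z) + S2
        ≤ 2 / L * tp ^ 2 * (f b - f z) + S1 := by
      rw [m1, m2]; linarith
    exact le_trans goal1 ihh

lemma sq_le_imp {X A : ℝ} (h : X ^ 2 ≤ A ^ 2) (hA : 0 ≤ A) : X ≤ A := by
  nlinarith [h, hA]

/-- Core lemma: at a gradient restart with positive gradient, the new iterate is
within `A/tr` of some minimizer. -/
lemma my_core {L : ℝ} (hL : 0 < L) {f : ℝ → ℝ} (hconv : ConvexOn ℝ Set.univ f)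
    (hdiff : Differentiable ℝ f)
    (hlip : ∀ a b : ℝ, |deriv f a - deriv f b| ≤ L * |a - b|)
    {xstar : ℝ} (hmin : IsMinOn f Set.univ xstar)
    (a b p ym yr tp tr A : ℝ)
    (htp : 1 ≤ tp) (htr : 1 ≤ tr)
    (hb : b = ym - (1 / L) * deriv f ym)
    (hym : deriv f ym * (b - a) ≤ 0)
    (hyr : yr = b + ((tp - 1) / tr) * (b - a))
    (hp : p = yr - (1 / L) * deriv f yr)
    (hgpos : 0 < deriv f yr)
    (hsp : b < p)
    (hu : (tp * b - (tp - 1) * a - xstar) ^ 2 ≤ A ^ 2)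
    (hA : 0 ≤ A) :
    ∃ z, IsMinOn f Set.univ z ∧ (p - z) ^ 2 ≤ (A / tr) ^ 2 := by
  have htr0 : (0:ℝ) < tr := lt_of_lt_of_le one_pos htr
  have hminval : ∀ w, f xstar ≤ f w := fun w => hmin (Set.mem_univ w)
  set S : Set ℝ := {w | f w ≤ f xstar} with hSdef
  have hSmin : ∀ w ∈ S, IsMinOn f Set.univ w := by
    intro w hw
    refine isMinOn_iff.mpr fun w' _ => le_trans hw (hminval w')
  have hxstarS : xstar ∈ S := by show f xstar ≤ f xstar; exact le_refl _
  have hSclosed : IsClosed S := by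
    have : S = f ⁻¹' (Set.Iic (f xstar)) := rfl
    rw [this]
    exact IsClosed.preimage hdiff.continuous isClosed_Iic
  have deriv0 : ∀ w, IsMinOn f Set.univ w → deriv f w = 0 := fun w hw =>
    (hw.isLocalMin Filter.univ_mem).deriv_eq_zero
  -- the gradient at p is nonnegative
  have hpyr : p - yr = -((1 / L) * deriv f yr) := by rw [hp]; ring
  have habs : |p - yr| = (1 / L) * deriv f yr := by
    rw [hpyr, abs_neg, abs_of_nonneg (by positivity)]
  have hgp0 : 0 ≤ deriv f p := by
    have hl := hlip p yr
    rw [habs] at hl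
    have he : L * ((1 / L) * deriv f yr) = deriv f yr := by field_simp
    rw [he] at hl
    have := (abs_le.mp hl).1
    linarith
  rcases eq_or_lt_of_le hgp0 with heq | hlt
  · -- p itself is a minimizer
    have hpmin : IsMinOn f Set.univ p := by
      refine isMinOn_iff.mpr fun w _ => ?_
      have hs := my_subgrad hconv hdiff p w
      rw [← heq] at hs
      simpa using hs
    refine ⟨p, hpmin, ?_⟩
    have : (p - p) ^ 2 = 0 := by ring
    rw [this]
    positivity
  · -- all minimizers lie strictly left of p
    have hboundS : ∀ w ∈ S, w ≤ p := by
      intro w hw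
      by_contra hcon
      push_neg at hcon
      have hs := my_subgrad hconv hdiff p w
      have hwx : f w ≤ f xstar := hw
      have hxp : f xstar ≤ f p := hminval p
      nlinarith [hs, mul_pos hlt (by linarith : (0:ℝ) < w - p)]
    have hSne : S.Nonempty := ⟨xstar, hxstarS⟩
    have hSbdd : BddAbove S := ⟨p, fun w hw => hboundS w hw⟩
    set zs := sSup S with hzs
    have hzS : zs ∈ S := hSclosed.csSup_mem hSne hSbdd
    have hzmin : IsMinOn f Set.univ zs := hSmin _ hzS
    have hzp : zs ≤ p := hboundS _ hzS
    have hxz : xstar ≤ zs := le_csSup hSbdd hxstarS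
    have hgz : deriv f zs = 0 := deriv0 _ hzmin
    -- the momentum is positive
    have hyrb : tr * (yr - b) = (tp - 1) * (b - a) := by
      rw [hyr]; field_simp; ring
    have hyrp : yr - p = (1 / L) * deriv f yr := by rw [hp]; ring
    have syr : 0 < yr - b := by
      have h1 : 0 < yr - p := by rw [hyrp]; positivity
      linarith
    have hQpos : 0 < (tp - 1) * (b - a) := by
      rw [← hyrb]; exact mul_pos htr0 syr
    have hba : 0 < b - a := by nlinarith [hQpos, htp]
    have hgm : deriv f ym ≤ 0 := by nlinarith [hym, hba]
    -- x_r = b lies left of the maximal minimizer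
    have hbz : b ≤ zs := by
      rcases le_or_gt ym zs with hcase | hcase
      · have hl := hlip ym zs
        rw [hgz, sub_zero] at hl
        rw [abs_of_nonpos (by linarith : ym - zs ≤ 0)] at hl
        have h1 : -deriv f ym ≤ L * (zs - ym) := by
          have := neg_abs_le (deriv f ym)
          have h2 : |deriv f ym| ≤ L * (zs - ym) := by linarith [hl]
          linarith
        have h3 : (1 / L) * (-deriv f ym) ≤ (1 / L) * (L * (zs - ym)) :=
          mul_le_mul_of_nonneg_left h1 (by positivity)
        have h4 : (1 / L) * (L * (zs - ym)) = zs - ym := by field_simp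
        rw [h4] at h3
        rw [hb]; linarith
      · exfalso
        have hmono := hconv.monotoneOn_deriv (fun w _ => hdiff w)
        have h0 := hmono (Set.mem_univ zs) (Set.mem_univ ym) hcase.le
        rw [hgz] at h0
        have hgm0 : deriv f ym = 0 := le_antisymm hgm h0
        have hymS : ym ∈ S := by
          show f ym ≤ f xstar
          have hs := my_subgrad hconv hdiff ym xstar
          rw [hgm0] at hs
          simpa using hs
        have := le_csSup hSbdd hymS
        linarith
    -- the chain
    have hsle : tr * (p - b) ≤ (tp - 1) * (b - a) := by
      have h1 : p - b ≤ yr - b := by linarith [syr, hyrp, mul_pos (by positivity : (0:ℝ) < 1/L) hgpos]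
      have h2 : tr * (p - b) ≤ tr * (yr - b) := mul_le_mul_of_nonneg_left h1 htr0.le
      linarith [hyrb]
    have huX : tp * b - (tp - 1) * a - xstar ≤ A := sq_le_imp hu hA
    have hfin : tr * (p - zs) ≤ A := by
      linarith [hsle, huX, mul_nonneg (sub_nonneg.mpr htr) (sub_nonneg.mpr hbz), hxz]
    have hd0 : 0 ≤ p - zs := by linarith
    refine ⟨zs, hzmin, ?_⟩
    have h1 : p - zs ≤ A / tr := by rw [le_div_iff₀ htr0]; linarith
    exact pow_le_pow_left₀ hd0 h1 2

/-- Reflected core lemma: negative gradient case. -/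
lemma my_core_neg {L : ℝ} (hL : 0 < L) {f : ℝ → ℝ} (hconv : ConvexOn ℝ Set.univ f)
    (hdiff : Differentiable ℝ f)
    (hlip : ∀ a b : ℝ, |deriv f a - deriv f b| ≤ L * |a - b|)
    {xstar : ℝ} (hmin : IsMinOn f Set.univ xstar)
    (a b p ym yr tp tr A : ℝ)
    (htp : 1 ≤ tp) (htr : 1 ≤ tr)
    (hb : b = ym - (1 / L) * deriv f ym)
    (hym : deriv f ym * (b - a) ≤ 0)
    (hyr : yr = b + ((tp - 1) / tr) * (b - a))
    (hp : p = yr - (1 / L) * deriv f yr)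
    (hgneg : deriv f yr < 0)
    (hsp : p < b)
    (hu : (tp * b - (tp - 1) * a - xstar) ^ 2 ≤ A ^ 2)
    (hA : 0 ≤ A) :
    ∃ z, IsMinOn f Set.univ z ∧ (p - z) ^ 2 ≤ (A / tr) ^ 2 := by
  set F : ℝ → ℝ := fun w => f (-w) with hF
  have hder : ∀ w : ℝ, deriv F w = -deriv f (-w) := fun w => deriv_comp_neg f w
  have hFdiff : Differentiable ℝ F := hdiff.comp differentiable_neg
  have hFconv : ConvexOn ℝ Set.univ F := by
    refine ⟨convex_univ, fun w _ v _ α β hα hβ hαβ => ?_⟩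
    have h := hconv.2 (Set.mem_univ (-w)) (Set.mem_univ (-v)) hα hβ hαβ
    simp only [smul_eq_mul] at h ⊢
    show f (-(α * w + β * v)) ≤ α * f (-w) + β * f (-v)
    have e : -(α * w + β * v) = α * -w + β * -v := by ring
    rw [e]; exact h
  have hFlip : ∀ c d : ℝ, |deriv F c - deriv F d| ≤ L * |c - d| := by
    intro c d
    rw [hder, hder]
    have e : -deriv f (-c) - -deriv f (-d) = -(deriv f (-c) - deriv f (-d)) := by ring
    rw [e, abs_neg]
    have e2 : |(-c) - (-d)| = |c - d| := by
      rw [show (-c) - (-d) = -(c - d) by ring, abs_neg]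
    rw [← e2]
    exact hlip (-c) (-d)
  have hFmin : IsMinOn F Set.univ (-xstar) := by
    refine isMinOn_iff.mpr fun w _ => ?_
    show f (-(-xstar)) ≤ f (-w)
    rw [neg_neg]
    exact hmin (Set.mem_univ (-w))
  have hb' : -b = -ym - (1 / L) * deriv F (-ym) := by
    rw [hder, neg_neg, hb]; ring
  have hym' : deriv F (-ym) * (-b - -a) ≤ 0 := by
    rw [hder, neg_neg]
    linarith [hym, (by ring : -deriv f ym * (-b - -a) = deriv f ym * (b - a))]
  have hyr' : -yr = -b + ((tp - 1) / tr) * (-b - -a) := by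
    have e : (tp - 1) / tr * (-b - -a) = -((tp - 1) / tr * (b - a)) := by ring
    rw [e, hyr]; ring
  have hp' : -p = -yr - (1 / L) * deriv F (-yr) := by
    rw [hder, neg_neg, hp]; ring
  have hgpos' : 0 < deriv F (-yr) := by rw [hder, neg_neg]; linarith
  have hsp' : -b < -p := by linarith
  have hu' : (tp * -b - (tp - 1) * -a - -xstar) ^ 2 ≤ A ^ 2 := by
    have e : tp * -b - (tp - 1) * -a - -xstar = -(tp * b - (tp - 1) * a - xstar) := by ring
    rw [e, neg_sq]
    exact hu
  obtain ⟨z', hz'min, hz'd⟩ := my_core hL hFconv hFdiff hFlip hFmin (-a) (-b) (-p) (-ym) (-yr)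
    tp tr A htp htr hb' hym' hyr' hp' hgpos' hsp' hu' hA
  refine ⟨-z', ?_, ?_⟩
  · refine isMinOn_iff.mpr fun w _ => ?_
    have h := hz'min (Set.mem_univ (-w))
    show f (-z') ≤ f w
    have h2 : f (-z') ≤ f (-(-w)) := h
    rwa [neg_neg] at h2
  · have e : (p - -z') ^ 2 = (-p - z') ^ 2 := by ring
    rw [e]
    exact hz'd


set_option maxHeartbeats 1000000 in
theorem stmt5
    (L : ℝ) (hL : 0 < L) (f : ℝ → ℝ)
    (hconv : ConvexOn ℝ Set.univ f) (hdiff : Differentiable ℝ f)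
    (hlip : ∀ a b : ℝ, |deriv f a - deriv f b| ≤ L * |a - b|)
    (tt : ℕ → ℝ) (htt : ParamSeq tt)
    (x0 : ℝ) (x y t : ℕ → ℝ) (halg : IsAlgo1 L f tt x0 x y t)
    (xstar : ℝ) (hmin : IsMinOn f Set.univ xstar)
    (hproj : ∀ z : ℝ, IsMinOn f Set.univ z → |x0 - xstar| ≤ |x0 - z|)
    (r rbar : ℕ) (hrr : r < rbar)
    (hnores : ∀ j < r, ¬ RestartAt f x y j) (hres : RestartAt f x y r)
    (hbetween : ∀ j, r < j → j < rbar → ¬ RestartAt f x y j)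
    (hres2 : RestartAt f x y rbar) :
    ∀ k : ℕ, r + 3 ≤ k → k ≤ rbar + 1 →
      f (x k) - f xstar ≤
          (4 / (((k : ℝ) - (r : ℝ)) * ((r : ℝ) + 2))) ^ 2 * (L / 2) * (x0 - xstar) ^ 2 ∧
      (4 / (((k : ℝ) - (r : ℝ)) * ((r : ℝ) + 2))) ^ 2 * (L / 2) * (x0 - xstar) ^ 2 ≤
          2 * L * (x0 - xstar) ^ 2 / ((k : ℝ) + 1) ^ 2 := by
  obtain ⟨hx0, hy0, hstep, c, hc0, htc, hbr⟩ := halg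
  obtain ⟨htt0, htt2⟩ := htt
  have httge : ∀ k : ℕ, ((k : ℝ) + 2) / 2 ≤ tt k := fun k => (htt2 k).1
  have httsq : ∀ k : ℕ, (tt (k + 1)) ^ 2 - tt (k + 1) ≤ (tt k) ^ 2 := fun k => (htt2 k).2
  have hstep' : ∀ j : ℕ, x (j + 1) = y j - (1 / L) * deriv f (y j) := hstep
  have hminval : ∀ w : ℝ, f xstar ≤ f w := fun w => hmin (Set.mem_univ w)
  have hnr : ∀ j : ℕ, ¬ RestartAt f x y j →
      (y (j + 1) = x (j + 1) + ((t j - 1) / t (j + 1)) * (x (j + 1) - x j) ∧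
        c (j + 1) = c j + 1) := fun j h => (hbr j).1 (not_lt.mp h)
  -- the first restart cannot occur before iteration 2
  have hr2 : 2 ≤ r := by
    by_contra hcon
    push_neg at hcon
    interval_cases r
    · have hh : 0 < deriv f (y 0) * (x 1 - x 0) := hres
      have h1 : x 1 = y 0 - (1 / L) * deriv f (y 0) := hstep' 0
      have h0 : x 0 = y 0 := by rw [hx0, hy0]
      have he : deriv f (y 0) * (x 1 - x 0) = -((1 / L) * (deriv f (y 0)) ^ 2) := by
        rw [h1, h0]; ring
      rw [he] at hh
      nlinarith only [hh, mul_nonneg (le_of_lt (by positivity : (0:ℝ) < 1 / L))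
        (sq_nonneg (deriv f (y 0)))]
    · have hnr0 := (hnr 0 (hnores 0 (by norm_num))).1
      have ht00 : t 0 = 1 := by rw [htc 0, hc0, htt0]
      have hy1 : y 1 = x 1 := by rw [hnr0, ht00]; ring
      have hh : 0 < deriv f (y 1) * (x 2 - x 1) := hres
      have h1 : x 2 = y 1 - (1 / L) * deriv f (y 1) := hstep' 1
      have he : deriv f (y 1) * (x 2 - x 1) = -((1 / L) * (deriv f (y 1)) ^ 2) := by
        rw [h1, hy1]; ring
      rw [he] at hh
      nlinarith only [hh, mul_nonneg (le_of_lt (by positivity : (0:ℝ) < 1 / L))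
        (sq_nonneg (deriv f (y 1)))]
  obtain ⟨r0, rfl⟩ : ∃ r0, r = r0 + 2 := ⟨r - 2, by omega⟩
  -- phase 1 counters
  have hck : ∀ k : ℕ, k ≤ r0 + 2 → c k = k := by
    intro k
    induction k with
    | zero => intro _; exact hc0
    | succ k ih =>
      intro hk
      rw [(hnr k (hnores k (by omega))).2, ih (by omega)]
  have htk : ∀ k : ℕ, k ≤ r0 + 2 → t k = tt k := fun k hk => by rw [htc k, hck k hk]
  have hyform1 : ∀ j : ℕ, j + 1 ≤ r0 + 2 →
      y (j + 1) = x (j + 1) + ((tt j - 1) / tt (j + 1)) * (x (j + 1) - x j) := by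
    intro j hj
    rw [(hnr j (hnores j (by omega))).1, htk j (by omega), htk (j + 1) (by omega)]
  -- phase 1 Lyapunov
  have phase1 := my_agd hL hconv hdiff hlip htt0 httge httsq x y (hy0.trans hx0.symm) hstep'
    (r0 + 2) (fun j hj => hyform1 j (by omega)) xstar hmin
  have hu1 := phase1 (r0 + 1) (by omega)
  set A := |x0 - xstar| with hAdef
  have hA0 : 0 ≤ A := abs_nonneg _
  have hA2 : A ^ 2 = (x0 - xstar) ^ 2 := sq_abs _
  have hu : (tt (r0 + 1) * x (r0 + 2) - (tt (r0 + 1) - 1) * x (r0 + 1) - xstar) ^ 2 ≤ A ^ 2 := by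
    have hgap1 : 0 ≤ 2 / L * (tt (r0 + 1)) ^ 2 * (f (x (r0 + 2)) - f xstar) := by
      have h := hminval (x (r0 + 2))
      have h2 : 0 ≤ f (x (r0 + 2)) - f xstar := by linarith only [h]
      have h3 : (0:ℝ) ≤ 2 / L * (tt (r0 + 1)) ^ 2 := by positivity
      exact mul_nonneg h3 h2
    have hx00 : (x 0 - xstar) ^ 2 = A ^ 2 := by rw [hx0, hA2]
    linarith only [hu1, hgap1, hx00]
  -- restart facts
  have hyx : y (r0 + 3) = x (r0 + 3) := ((hbr (r0 + 2)).2 hres).1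
  have hcr : c (r0 + 3) = 0 := ((hbr (r0 + 2)).2 hres).2
  have hresval : 0 < deriv f (y (r0 + 2)) * (x (r0 + 3) - x (r0 + 2)) := hres
  have hbformula : x (r0 + 2) = y (r0 + 1) - (1 / L) * deriv f (y (r0 + 1)) := hstep' (r0 + 1)
  have hymr : deriv f (y (r0 + 1)) * (x (r0 + 2) - x (r0 + 1)) ≤ 0 :=
    not_lt.mp (hnores (r0 + 1) (by omega))
  have hyrf : y (r0 + 2) = x (r0 + 2) +
      ((tt (r0 + 1) - 1) / tt (r0 + 2)) * (x (r0 + 2) - x (r0 + 1)) := hyform1 (r0 + 1) (by omega)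
  have hpf : x (r0 + 3) = y (r0 + 2) - (1 / L) * deriv f (y (r0 + 2)) := hstep' (r0 + 2)
  have htp1 : 1 ≤ tt (r0 + 1) := tt_ge httge _
  have htr1 : 1 ≤ tt (r0 + 2) := tt_ge httge _
  -- the key distance estimate
  have hdist : ∃ z, IsMinOn f Set.univ z ∧ (x (r0 + 3) - z) ^ 2 ≤ (A / tt (r0 + 2)) ^ 2 := by
    rcases mul_pos_iff.mp hresval with ⟨hg1, hg2⟩ | ⟨hg1, hg2⟩
    · have hsp : x (r0 + 2) < x (r0 + 3) := by linarith only [hg2]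
      exact my_core hL hconv hdiff hlip hmin (x (r0 + 1)) (x (r0 + 2)) (x (r0 + 3))
        (y (r0 + 1)) (y (r0 + 2)) (tt (r0 + 1)) (tt (r0 + 2)) A htp1 htr1 hbformula hymr
        hyrf hpf hg1 hsp hu hA0
    · have hsp : x (r0 + 3) < x (r0 + 2) := by linarith only [hg2]
      exact my_core_neg hL hconv hdiff hlip hmin (x (r0 + 1)) (x (r0 + 2)) (x (r0 + 3))
        (y (r0 + 1)) (y (r0 + 2)) (tt (r0 + 1)) (tt (r0 + 2)) A htp1 htr1 hbformula hymr
        hyrf hpf hg1 hsp hu hA0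
  obtain ⟨z, hzmin, hzd⟩ := hdist
  have hfz : f z = f xstar := le_antisymm (hzmin (Set.mem_univ xstar)) (hminval z)
  -- phase 2 counters
  have hc2 : ∀ m : ℕ, r0 + 3 + m ≤ rbar → c (r0 + 3 + m) = m := by
    intro m
    induction m with
    | zero => intro _; exact hcr
    | succ m ih =>
      intro hm
      have h1 := (hnr (r0 + 3 + m) (hbetween (r0 + 3 + m) (by omega) (by omega))).2
      show c (r0 + 3 + m + 1) = m + 1
      rw [h1, ih (by omega)]
  have ht2 : ∀ m : ℕ, r0 + 3 + m ≤ rbar → t (r0 + 3 + m) = tt m := fun m hm => by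
    rw [htc, hc2 m hm]
  have hy2 : ∀ j : ℕ, j + 2 ≤ rbar - (r0 + 2) →
      y (r0 + 3 + (j + 1)) = x (r0 + 3 + (j + 1)) +
        ((tt j - 1) / tt (j + 1)) * (x (r0 + 3 + (j + 1)) - x (r0 + 3 + j)) := by
    intro j hj
    have h1 := (hnr (r0 + 3 + j) (hbetween (r0 + 3 + j) (by omega) (by omega))).1
    have e1 : t (r0 + 3 + j) = tt j := ht2 j (by omega)
    have e2 : t (r0 + 3 + j + 1) = tt (j + 1) := ht2 (j + 1) (by omega)
    show y (r0 + 3 + j + 1) = x (r0 + 3 + j + 1) +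
      ((tt j - 1) / tt (j + 1)) * (x (r0 + 3 + j + 1) - x (r0 + 3 + j))
    rw [h1, e1, e2]
  -- phase 2 Lyapunov
  have phase2 := my_agd hL hconv hdiff hlip htt0 httge httsq (fun i => x (r0 + 3 + i))
    (fun i => y (r0 + 3 + i)) hyx (fun j => hstep' (r0 + 3 + j)) (rbar - (r0 + 2)) hy2 z hzmin
  -- conclusion
  intro k hk1 hk2
  obtain ⟨j, rfl⟩ : ∃ j, k = r0 + 5 + j := ⟨k - (r0 + 5), by omega⟩
  have hP : 2 / L * tt (j + 1) ^ 2 * (f (x (r0 + 3 + (j + 1 + 1))) - f z) +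
      (tt (j + 1) * x (r0 + 3 + (j + 1 + 1)) - (tt (j + 1) - 1) * x (r0 + 3 + (j + 1)) - z) ^ 2
      ≤ (x (r0 + 3) - z) ^ 2 := phase2 (j + 1) (by omega)
  have hxk : x (r0 + 3 + (j + 1 + 1)) = x (r0 + 5 + j) := by congr 1; omega
  have hxk2 : x (r0 + 3 + (j + 1)) = x (r0 + 4 + j) := by congr 1; omega
  rw [hxk, hxk2, hfz] at hP
  -- numeric setup
  have hT1 : ((j : ℝ) + 3) / 2 ≤ tt (j + 1) := by
    have h := httge (j + 1); push_cast at h; linarith only [h]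
  have hT2 : ((r0 : ℝ) + 4) / 2 ≤ tt (r0 + 2) := by
    have h := httge (r0 + 2); push_cast at h; linarith only [h]
  have hgapnn : 0 ≤ f (x (r0 + 5 + j)) - f xstar := by
    linarith only [hminval (x (r0 + 5 + j))]
  have hD2nn : (0:ℝ) ≤ (x (r0 + 3) - z) ^ 2 := sq_nonneg _
  clear_value A
  set T1 := tt (j + 1) with hT1def
  set T2 := tt (r0 + 2) with hT2def
  set gap := f (x (r0 + 5 + j)) - f xstar with hgapdef
  set D2 := (x (r0 + 3) - z) ^ 2 with hD2def
  clear_value T1 T2 gap D2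
  have hj0 : (0:ℝ) ≤ (j : ℝ) := Nat.cast_nonneg j
  have hr0 : (0:ℝ) ≤ (r0 : ℝ) := Nat.cast_nonneg r0
  have hT1p : 0 < T1 := lt_of_lt_of_le (by linarith only [hj0]) hT1
  have hT2p : 0 < T2 := lt_of_lt_of_le (by linarith only [hr0]) hT2
  have h5 : 2 / L * T1 ^ 2 * gap ≤ D2 := by
    have hsq := sq_nonneg (T1 * x (r0 + 5 + j) - (T1 - 1) * x (r0 + 4 + j) - z)
    linarith only [hP, hsq]
  have h6 : T1 ^ 2 * gap ≤ L / 2 * D2 := by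
    have e : L / 2 * (2 / L * (T1 ^ 2 * gap)) = T1 ^ 2 * gap := by
      field_simp
    have h7 : 2 / L * (T1 ^ 2 * gap) ≤ D2 := by
      linarith only [h5, (by ring : 2 / L * T1 ^ 2 * gap = 2 / L * (T1 ^ 2 * gap))]
    have h8 := mul_le_mul_of_nonneg_left h7 (by positivity : (0:ℝ) ≤ L / 2)
    rw [e] at h8
    exact h8
  have qD : D2 * T2 ^ 2 ≤ A ^ 2 := by
    have h9 : D2 ≤ A ^ 2 / T2 ^ 2 := by rw [← div_pow]; exact hzd
    exact (le_div_iff₀ (by positivity)).mp h9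
  -- cast simplifications
  have hcast1 : ((r0 + 5 + j : ℕ) : ℝ) - ((r0 + 2 : ℕ) : ℝ) = (j : ℝ) + 3 := by
    push_cast; ring
  have hcast2 : ((r0 + 2 : ℕ) : ℝ) + 2 = (r0 : ℝ) + 4 := by push_cast; ring
  have hcast3 : ((r0 + 5 + j : ℕ) : ℝ) + 1 = (r0 : ℝ) + (j : ℝ) + 6 := by push_cast; ring
  rw [hcast1, hcast2, hcast3, ← hA2]
  have htarget : (4 / (((j : ℝ) + 3) * ((r0 : ℝ) + 4))) ^ 2 * (L / 2) * A ^ 2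
      = 8 * L * A ^ 2 / (((j : ℝ) + 3) ^ 2 * ((r0 : ℝ) + 4) ^ 2) := by
    rw [div_pow, mul_pow]
    rw [div_mul_eq_mul_div, div_mul_eq_mul_div, div_eq_div_iff (by positivity) (by positivity)]
    ring
  constructor
  · -- first inequality
    rw [htarget, le_div_iff₀ (by positivity)]
    have q1 : ((j : ℝ) + 3) ^ 2 ≤ 4 * T1 ^ 2 := by nlinarith only [hT1, hj0]
    have q2 : ((r0 : ℝ) + 4) ^ 2 ≤ 4 * T2 ^ 2 := by nlinarith only [hT2, hr0]
    have s1 : gap * (((j : ℝ) + 3) ^ 2 * ((r0 : ℝ) + 4) ^ 2)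
        ≤ gap * (4 * T1 ^ 2 * (4 * T2 ^ 2)) := by
      have q12 : ((j : ℝ) + 3) ^ 2 * ((r0 : ℝ) + 4) ^ 2 ≤ 4 * T1 ^ 2 * (4 * T2 ^ 2) :=
        mul_le_mul q1 q2 (by positivity) (by positivity)
      exact mul_le_mul_of_nonneg_left q12 hgapnn
    have s3 : 16 * (T1 ^ 2 * gap) * T2 ^ 2 ≤ 16 * (L / 2 * D2) * T2 ^ 2 :=
      mul_le_mul_of_nonneg_right (by linarith only [h6]) (sq_nonneg T2)
    have s5 : 8 * L * (D2 * T2 ^ 2) ≤ 8 * L * A ^ 2 :=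
      mul_le_mul_of_nonneg_left qD (by positivity)
    linarith only [s1, s3, s5,
      (by ring : gap * (4 * T1 ^ 2 * (4 * T2 ^ 2)) = 16 * (T1 ^ 2 * gap) * T2 ^ 2),
      (by ring : 16 * (L / 2 * D2) * T2 ^ 2 = 8 * L * (D2 * T2 ^ 2))]
  · -- second inequality
    rw [htarget, div_le_div_iff₀ (by positivity) (by positivity)]
    have q3 : 2 * ((r0 : ℝ) + (j : ℝ) + 6) ≤ ((j : ℝ) + 3) * ((r0 : ℝ) + 4) := by
      linarith only [mul_nonneg hj0 hr0, hj0, hr0]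
    have q4 : 4 * ((r0 : ℝ) + (j : ℝ) + 6) ^ 2 ≤ (((j : ℝ) + 3) * ((r0 : ℝ) + 4)) ^ 2 := by
      nlinarith only [q3, hj0, hr0]
    have q5 := mul_le_mul_of_nonneg_left q4 (show (0:ℝ) ≤ 2 * (L * A ^ 2) by positivity)
    linarith only [q5,
      (by ring : 2 * (L * A ^ 2) * (4 * ((r0 : ℝ) + (j : ℝ) + 6) ^ 2)
        = 8 * L * A ^ 2 * ((r0 : ℝ) + (j : ℝ) + 6) ^ 2),
      (by ring : 2 * (L * A ^ 2) * ((((j : ℝ) + 3) * ((r0 : ℝ) + 4)) ^ 2)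
        = 2 * L * A ^ 2 * (((j : ℝ) + 3) ^ 2 * ((r0 : ℝ) + 4) ^ 2))]
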